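/- Let Q₁, Q₂ ⊆ E be closed convex sets with nonempty intersection and let f(x) = max(dist(x, Q₁), dist(x, Q₂)). If x ∈ Q₁ and x ∉ Q₂, then the unit vector g = (x − Π_{Q₂}(x)) / ‖x − Π_{Q₂}(x)‖ is a subgradient of f at x, and consequently the alternate-projection update x⁺ = Π_{Q₂}(x) coincides with a subgradient step x⁺ = x − t g with step size t = ‖x − Π_{Q₂}(x)‖ = f(x). -/

import Mathlib

/-- The alternate projection step as a subgradient step: if `x ∈ Q₁ \ Q₂` and `p` is the
Euclidean projection of `x` onto `Q₂`, then the unit vector `g = (x − p)/‖x − p‖` is a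
subgradient at `x` of `f(z) = max(dist(z, Q₁), dist(z, Q₂))`, and the update
`x⁺ = Π_{Q₂}(x) = p` coincides with the subgradient step `x − f(x) • g`
with step size `f(x) = ‖x − p‖`. -/
theorem stmt19 {E : Type*} [NormedAddCommGroup E] [InnerProductSpace ℝ E]
    [FiniteDimensional ℝ E] (Q₁ Q₂ : Set E)
    (h₁ : IsClosed Q₁) (hc₁ : Convex ℝ Q₁) (h₂ : IsClosed Q₂) (hc₂ : Convex ℝ Q₂)
    (hne : (Q₁ ∩ Q₂).Nonempty) (x p : E) (hx₁ : x ∈ Q₁) (hx₂ : x ∉ Q₂)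
    (hp : p ∈ Q₂) (hproj : ∀ y ∈ Q₂, ‖x - p‖ ≤ ‖x - y‖) :
    let f : E → ℝ := fun z => max (Metric.infDist z Q₁) (Metric.infDist z Q₂)
    let g : E := ‖x - p‖⁻¹ • (x - p)
    (∀ y, f x + (inner ℝ g (y - x) : ℝ) ≤ f y) ∧ f x = ‖x - p‖ ∧ p = x - f x • g := by
  intro f g
  have hQ₂ne : Q₂.Nonempty := ⟨p, hp⟩
  haveI : Nonempty Q₂ := ⟨⟨p, hp⟩⟩
  have hxp : x ≠ p := fun h => hx₂ (h ▸ hp)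
  have hnorm : (0:ℝ) < ‖x - p‖ := by
    rw [norm_pos_iff, sub_ne_zero]; exact hxp
  have hg : ‖g‖ = 1 := by
    show ‖‖x - p‖⁻¹ • (x - p)‖ = 1
    rw [norm_smul, norm_inv, norm_norm, inv_mul_cancel₀ hnorm.ne']
  have hgxp : (inner ℝ g (x - p) : ℝ) = ‖x - p‖ := by
    show (inner ℝ (‖x - p‖⁻¹ • (x - p)) (x - p) : ℝ) = ‖x - p‖
    rw [real_inner_smul_left, real_inner_self_eq_norm_sq]
    field_simp
  have hinf : ‖x - p‖ = ⨅ w : Q₂, ‖x - (w : E)‖ := by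
    refine le_antisymm (le_ciInf fun w => hproj w w.2) ?_
    exact ciInf_le ⟨0, by rintro _ ⟨w, rfl⟩; exact norm_nonneg _⟩ (⟨p, hp⟩ : Q₂)
  have hvar : ∀ q ∈ Q₂, (inner ℝ (x - p) (q - p) : ℝ) ≤ 0 :=
    (norm_eq_iInf_iff_real_inner_le_zero hc₂ hp).mp hinf
  have hfx2 : Metric.infDist x Q₂ = ‖x - p‖ := by
    refine le_antisymm ?_ ?_
    · calc Metric.infDist x Q₂ ≤ dist x p := Metric.infDist_le_dist_of_mem hp
        _ = ‖x - p‖ := dist_eq_norm x p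
    · rw [Metric.infDist_eq_iInf]
      refine le_ciInf fun q => ?_
      rw [dist_eq_norm]
      exact hproj q q.2
  have hfx : f x = ‖x - p‖ := by
    show max (Metric.infDist x Q₁) (Metric.infDist x Q₂) = ‖x - p‖
    rw [Metric.infDist_zero_of_mem hx₁, hfx2]
    exact max_eq_right hnorm.le
  refine ⟨?_, hfx, ?_⟩
  · intro y
    have key : ‖x - p‖ + (inner ℝ g (y - x) : ℝ) ≤ Metric.infDist y Q₂ := by
      rw [Metric.infDist_eq_iInf]
      refine le_ciInf fun qq => ?_
      obtain ⟨q, hq⟩ := qq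
      have h1 : (inner ℝ g (y - q) : ℝ) ≤ ‖y - q‖ := by
        calc (inner ℝ g (y - q) : ℝ) ≤ ‖g‖ * ‖y - q‖ := real_inner_le_norm _ _
          _ = ‖y - q‖ := by rw [hg, one_mul]
      have h2 : (0:ℝ) ≤ inner ℝ g (p - q) := by
        have hq' := hvar q hq
        show (0:ℝ) ≤ inner ℝ (‖x - p‖⁻¹ • (x - p)) (p - q)
        rw [real_inner_smul_left]
        have : (inner ℝ (x - p) (p - q) : ℝ) = - inner ℝ (x - p) (q - p) := by
          rw [← inner_neg_right, neg_sub]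
        rw [this]
        exact mul_nonneg (by positivity) (by linarith)
      have hsplit : (inner ℝ g (y - q) : ℝ)
          = inner ℝ g (y - x) + inner ℝ g (x - p) + inner ℝ g (p - q) := by
        rw [← inner_add_right, ← inner_add_right]
        congr 1
        abel
      rw [dist_eq_norm]
      rw [hsplit, hgxp] at h1
      linarith
    calc f x + (inner ℝ g (y - x) : ℝ) = ‖x - p‖ + inner ℝ g (y - x) := by rw [hfx]
      _ ≤ Metric.infDist y Q₂ := key
      _ ≤ f y := le_max_right _ _
  · rw [hfx]
    show p = x - ‖x - p‖ • (‖x - p‖⁻¹ • (x - p))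
    rw [smul_smul, mul_inv_cancel₀ hnorm.ne', one_smul]
    abel
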